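/- Let G be a connected finite simple graph on the vertex set {1,…,n} with m edges. Then bar(J_G) = m, i.e., the binomial arithmetical rank of the binomial edge ideal J_G equals the number of edges of G. -/

import Mathlib

open MvPolynomial

noncomputable section

/-- `f_{pq} = x_p · x_{n+q} − x_q · x_{n+p}` in `K[x_1,…,x_{2n}]`, where the first `n`
variables are indexed by `Fin.castAdd n` and the last `n` variables by `Fin.natAdd n`. -/
def edgeBinomial (K : Type*) [Field K] (n : ℕ) (p q : Fin n) :
    MvPolynomial (Fin (n + n)) K :=
  X (Fin.castAdd n p) * X (Fin.natAdd n q) - X (Fin.castAdd n q) * X (Fin.natAdd n p)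

/-- The binomial edge ideal `J_G` of a graph `G` on the vertex set `{1,…,n}`. -/
def binomialEdgeIdeal (K : Type*) [Field K] {n : ℕ} (G : SimpleGraph (Fin n)) :
    Ideal (MvPolynomial (Fin (n + n)) K) :=
  Ideal.span {f | ∃ p q : Fin n, p < q ∧ G.Adj p q ∧ f = edgeBinomial K n p q}

/-- A binomial is a difference of two monomials. -/
def IsBinomial {K : Type*} [Field K] {m : ℕ} (f : MvPolynomial (Fin m) K) : Prop :=
  ∃ u v : Fin m →₀ ℕ, f = monomial u (1 : K) - monomial v 1

/-- The arithmetical rank: the smallest `s` such that there are `s` polynomials in `I`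
generating `I` up to radical. -/
def ara {K : Type*} [Field K] {m : ℕ} (I : Ideal (MvPolynomial (Fin m) K)) : ℕ :=
  sInf {s | ∃ F : Fin s → MvPolynomial (Fin m) K,
    (∀ i, F i ∈ I) ∧ (Ideal.span (Set.range F)).radical = I.radical}

/-- The binomial arithmetical rank: the smallest `s` such that there are `s` binomials in `I`
generating `I` up to radical. -/
def bar {K : Type*} [Field K] {m : ℕ} (I : Ideal (MvPolynomial (Fin m) K)) : ℕ :=
  sInf {s | ∃ B : Fin s → MvPolynomial (Fin m) K,
    (∀ i, IsBinomial (B i)) ∧ (∀ i, B i ∈ I) ∧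
    (Ideal.span (Set.range B)).radical = I.radical}

/-! ### Auxiliary material for the proof -/

section Aux

variable {K : Type*} [Field K] {n : ℕ}

/-- Collapse the doubled index set onto the vertex set. -/
def collapse (n : ℕ) : Fin (n + n) → Fin n :=
  Fin.addCases (fun i => i) (fun i => i)

@[simp] lemma collapse_castAdd (p : Fin n) : collapse n (Fin.castAdd n p) = p :=
  Fin.addCases_left p

@[simp] lemma collapse_natAdd (p : Fin n) : collapse n (Fin.natAdd n p) = p :=
  Fin.addCases_right p

lemma castAdd_ne_natAdd (p q : Fin n) : Fin.castAdd n p ≠ Fin.natAdd n q := by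
  intro h
  have h2 := congrArg Fin.val h
  have h3 : (Fin.castAdd n p).val = p.val := rfl
  have h4 : (Fin.natAdd n q).val = n + q.val := rfl
  have := p.isLt
  omega

/-- The exponent of the first monomial of `edgeBinomial K n p q`. -/
def euv (p q : Fin n) : Fin (n + n) →₀ ℕ :=
  Finsupp.single (Fin.castAdd n p) 1 + Finsupp.single (Fin.natAdd n q) 1

lemma X_mul_X (a b : Fin (n + n)) :
    (X a : MvPolynomial (Fin (n+n)) K) * X b
      = monomial (Finsupp.single a 1 + Finsupp.single b 1) 1 := by
  rw [MvPolynomial.X, MvPolynomial.X, monomial_mul, one_mul]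

lemma edgeBinomial_eq (p q : Fin n) :
    edgeBinomial K n p q = monomial (euv p q) 1 - monomial (euv q p) 1 := by
  rw [edgeBinomial, X_mul_X, X_mul_X, euv, euv]

lemma isBinomial_edgeBinomial (p q : Fin n) : IsBinomial (edgeBinomial K n p q) :=
  ⟨euv p q, euv q p, edgeBinomial_eq p q⟩

lemma euv_apply_castAdd_self (p q : Fin n) : euv p q (Fin.castAdd n p) = 1 := by
  rw [euv, Finsupp.add_apply, Finsupp.single_eq_same,
    Finsupp.single_eq_of_ne' (castAdd_ne_natAdd p q).symm]
  rfl

lemma euv_apply_castAdd_of_ne (p q r : Fin n) (h : r ≠ p) : euv p q (Fin.castAdd n r) = 0 := by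
  have h1 : (Finsupp.single (Fin.natAdd n q) (1:ℕ)) (Fin.castAdd n r) = 0 :=
    Finsupp.single_eq_of_ne' (castAdd_ne_natAdd r q).symm
  have h2 : (Finsupp.single (Fin.castAdd n p) (1:ℕ)) (Fin.castAdd n r) = 0 := by
    apply Finsupp.single_eq_of_ne'
    intro hc
    exact h (by
      have := congrArg (collapse n) hc
      rw [collapse_castAdd, collapse_castAdd] at this
      exact this.symm)
  rw [euv, Finsupp.add_apply, h2, h1]

lemma euv_ne (p q : Fin n) (h : p ≠ q) : euv p q ≠ euv q p := by
  intro he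
  have h1 : euv p q (Fin.castAdd n p) = euv q p (Fin.castAdd n p) := by rw [he]
  rw [euv_apply_castAdd_self, euv_apply_castAdd_of_ne q p p h] at h1
  exact one_ne_zero h1

lemma mem_support_euv_left (p q : Fin n) : Fin.castAdd n p ∈ (euv p q).support :=
  Finsupp.mem_support_iff.mpr (by rw [euv_apply_castAdd_self]; exact one_ne_zero)

lemma mem_support_euv_right (p q : Fin n) : Fin.natAdd n q ∈ (euv p q).support := by
  apply Finsupp.mem_support_iff.mpr
  rw [euv, Finsupp.add_apply, Finsupp.single_eq_of_ne' (castAdd_ne_natAdd p q),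
    Finsupp.single_eq_same]
  exact one_ne_zero

lemma support_euv_subset (p q : Fin n) :
    (euv p q).support ⊆ {Fin.castAdd n p, Fin.natAdd n q} := by
  refine (Finsupp.support_add).trans ?_
  intro w hw
  rcases Finset.mem_union.mp hw with h | h
  · exact Finset.mem_insert.mpr (Or.inl (Finset.mem_singleton.mp
      (Finsupp.support_single_subset h)))
  · exact Finset.mem_insert.mpr (Or.inr (Finsupp.support_single_subset h))

lemma edgeBinomial_ne_zero {p q : Fin n} (h : p ≠ q) : edgeBinomial K n p q ≠ 0 := by
  rw [edgeBinomial_eq, sub_ne_zero]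
  intro he
  have := congrArg (coeff (euv p q)) he
  rw [coeff_monomial, coeff_monomial, if_pos rfl, if_neg (euv_ne q p h.symm)] at this
  exact one_ne_zero this

/-- Substitution killing all variables whose vertex is outside `S`. -/
def cut (K : Type*) [Field K] {n : ℕ} (S : Finset (Fin n)) :
    MvPolynomial (Fin (n+n)) K →ₐ[K] MvPolynomial (Fin (n+n)) K :=
  aeval (fun w => if collapse n w ∈ S then X w else 0)

lemma cut_monomial_of_mem (S : Finset (Fin n)) (u : Fin (n+n) →₀ ℕ) (r : K)
    (h : ∀ w ∈ u.support, collapse n w ∈ S) :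
    cut K S (monomial u r) = monomial u r := by
  rw [cut, aeval_monomial]
  have : (Finsupp.prod u fun w k => (if collapse n w ∈ S then (X w : MvPolynomial (Fin (n+n)) K) else 0) ^ k)
      = Finsupp.prod u fun w k => (X w : MvPolynomial (Fin (n+n)) K) ^ k :=
    Finsupp.prod_congr (fun w hw => by rw [if_pos (h w hw)])
  rw [this, monomial_eq, algebraMap_eq]

lemma cut_monomial_of_not_mem (S : Finset (Fin n)) (u : Fin (n+n) →₀ ℕ) (r : K)
    (w₀ : Fin (n+n)) (hw₀ : w₀ ∈ u.support) (h : collapse n w₀ ∉ S) :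
    cut K S (monomial u r) = 0 := by
  rw [cut, aeval_monomial, Finsupp.prod]
  rw [Finset.prod_eq_zero hw₀ (by
    rw [if_neg h]
    exact zero_pow (Finsupp.mem_support_iff.mp hw₀))]
  rw [mul_zero]

lemma cut_edgeBinomial_of_mem (S : Finset (Fin n)) (p q : Fin n) (hp : p ∈ S) (hq : q ∈ S) :
    cut K S (edgeBinomial K n p q) = edgeBinomial K n p q := by
  rw [edgeBinomial_eq, map_sub]
  have h1 : ∀ w ∈ (euv p q).support, collapse n w ∈ S := by
    intro w hw
    rcases Finset.mem_insert.mp (support_euv_subset p q hw) with rfl | hw'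
    · rw [collapse_castAdd]; exact hp
    · rw [Finset.mem_singleton.mp hw', collapse_natAdd]; exact hq
  have h2 : ∀ w ∈ (euv q p).support, collapse n w ∈ S := by
    intro w hw
    rcases Finset.mem_insert.mp (support_euv_subset q p hw) with rfl | hw'
    · rw [collapse_castAdd]; exact hq
    · rw [Finset.mem_singleton.mp hw', collapse_natAdd]; exact hp
  rw [cut_monomial_of_mem S _ _ h1, cut_monomial_of_mem S _ _ h2]

lemma cut_edgeBinomial_of_not_mem (S : Finset (Fin n)) (p q : Fin n)
    (h : ¬(p ∈ S ∧ q ∈ S)) :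
    cut K S (edgeBinomial K n p q) = 0 := by
  rw [edgeBinomial_eq, map_sub]
  rcases not_and_or.mp h with hp | hq
  · rw [cut_monomial_of_not_mem S _ _ (Fin.castAdd n p) (mem_support_euv_left p q)
        (by rw [collapse_castAdd]; exact hp),
      cut_monomial_of_not_mem S _ _ (Fin.natAdd n p) (mem_support_euv_right q p)
        (by rw [collapse_natAdd]; exact hp),
      sub_zero]
  · rw [cut_monomial_of_not_mem S _ _ (Fin.natAdd n q) (mem_support_euv_right p q)
        (by rw [collapse_natAdd]; exact hq),
      cut_monomial_of_not_mem S _ _ (Fin.castAdd n q) (mem_support_euv_left q p)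
        (by rw [collapse_castAdd]; exact hq),
      sub_zero]

variable (G : SimpleGraph (Fin n)) [DecidableRel G.Adj]

lemma cut_map_le (S : Finset (Fin n)) :
    Ideal.map (cut K S) (binomialEdgeIdeal K G) ≤
      Ideal.span {f | ∃ p q : Fin n, p < q ∧ G.Adj p q ∧ p ∈ S ∧ q ∈ S ∧ f = edgeBinomial K n p q} := by
  rw [binomialEdgeIdeal, Ideal.map_span, Ideal.span_le]
  rintro g ⟨f, ⟨p, q, hpq, hadj, rfl⟩, rfl⟩
  by_cases h : p ∈ S ∧ q ∈ S
  · rw [cut_edgeBinomial_of_mem S p q h.1 h.2]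
    exact Ideal.subset_span ⟨p, q, hpq, hadj, h.1, h.2, rfl⟩
  · rw [cut_edgeBinomial_of_not_mem S p q h]
    exact Ideal.zero_mem _

lemma edge_set_subset_ideal (S : Finset (Fin n)) :
    {f | ∃ p q : Fin n, p < q ∧ G.Adj p q ∧ p ∈ S ∧ q ∈ S ∧ f = edgeBinomial K n p q}
      ⊆ (binomialEdgeIdeal K G : Set (MvPolynomial (Fin (n+n)) K)) := by
  rintro f ⟨p, q, hpq, hadj, _, _, rfl⟩
  exact Ideal.subset_span ⟨p, q, hpq, hadj, rfl⟩

lemma eval_one_eq_zero {g : MvPolynomial (Fin (n+n)) K}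
    (hg : g ∈ binomialEdgeIdeal K G) :
    eval (fun _ => (1:K)) g = 0 := by
  have hle : binomialEdgeIdeal K G ≤ RingHom.ker (eval (fun _ => (1:K))) := by
    rw [binomialEdgeIdeal, Ideal.span_le]
    rintro f ⟨p, q, hpq, hadj, rfl⟩
    simp [RingHom.mem_ker, edgeBinomial]
  exact hle hg

/-- If a pure-difference binomial lies in `J_G` and all of its variables collapse to the
single vertex `i`, then the binomial is zero. -/
lemma singleton_support (u v : Fin (n+n) →₀ ℕ)
    (hg : monomial u (1:K) - monomial v 1 ∈ binomialEdgeIdeal K G) (i : Fin n)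
    (hu : ∀ w ∈ u.support, collapse n w = i) (hv : ∀ w ∈ v.support, collapse n w = i) :
    u = v := by
  set ψ := cut K ({i} : Finset (Fin n)) with hψ
  have h1 : ψ (monomial u (1:K) - monomial v 1) = monomial u (1:K) - monomial v 1 := by
    rw [map_sub, cut_monomial_of_mem _ _ _ (fun w hw => Finset.mem_singleton.mpr (hu w hw)),
      cut_monomial_of_mem _ _ _ (fun w hw => Finset.mem_singleton.mpr (hv w hw))]
  have h2 : ψ (monomial u (1:K) - monomial v 1) ∈ Ideal.map ψ (binomialEdgeIdeal K G) :=
    Ideal.mem_map_of_mem _ hg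
  have h3 : Ideal.map ψ (binomialEdgeIdeal K G) ≤ ⊥ := by
    refine le_trans (cut_map_le G {i}) ?_
    rw [Ideal.span_le]
    rintro f ⟨p, q, hpq, _, hp, hq, rfl⟩
    exfalso
    rw [Finset.mem_singleton] at hp hq
    exact hpq.ne (hp.trans hq.symm)
  have h4 : monomial u (1:K) - monomial v 1 = 0 := by
    rw [← h1]; exact Ideal.mem_bot.mp (h3 h2)
  rw [sub_eq_zero] at h4
  have := congrArg (coeff u) h4
  rw [coeff_monomial, coeff_monomial, if_pos rfl] at this
  by_contra hne
  rw [if_neg (fun h => hne h.symm)] at this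
  exact one_ne_zero this

/-- Two distinct elements of `Sym2` have at most one common member. -/
lemma sym2_inter {α : Type*} (e e' : Sym2 α) (h : e ≠ e') :
    ∃ i, ∀ x, x ∈ e → x ∈ e' → x = i := by
  induction e using Sym2.ind with
  | _ a b =>
    induction e' using Sym2.ind with
    | _ c d =>
      by_cases hab : a = b
      · exact ⟨a, fun x hx _ => by rcases Sym2.mem_iff.mp hx with rfl | rfl; rfl; exact hab.symm⟩
      by_cases hc : a ∈ s(c, d)
      · by_cases hd : b ∈ s(c, d)
        · exfalso
          apply h
          rcases Sym2.mem_iff.mp hc with rfl | rfl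
          · rcases Sym2.mem_iff.mp hd with rfl | rfl
            · exact absurd rfl hab
            · rfl
          · rcases Sym2.mem_iff.mp hd with rfl | rfl
            · exact Sym2.eq_swap
            · exact absurd rfl hab
        · exact ⟨a, fun x hx hx' => by
            rcases Sym2.mem_iff.mp hx with rfl | rfl
            · rfl
            · exact absurd hx' hd⟩
      · exact ⟨b, fun x hx hx' => by
          rcases Sym2.mem_iff.mp hx with rfl | rfl
          · exact absurd hx' hc
          · rfl⟩

end Aux

section Main

variable {K : Type*} [Field K] {n : ℕ}
variable (G : SimpleGraph (Fin n)) [DecidableRel G.Adj]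

/-- Lower bound: any family of binomials generating `J_G` up to radical has at least as many
members as `G` has edges. -/
lemma lower_bound (s : ℕ) (B : Fin s → MvPolynomial (Fin (n+n)) K)
    (hbin : ∀ i, IsBinomial (B i)) (hmem : ∀ i, B i ∈ binomialEdgeIdeal K G)
    (hrad : (Ideal.span (Set.range B)).radical = (binomialEdgeIdeal K G).radical) :
    G.edgeFinset.card ≤ s := by
  classical
  choose u v huv using hbin
  set J := binomialEdgeIdeal K G with hJ
  set Q : Sym2 (Fin n) → Fin s → Prop := fun e t =>
    B t ≠ 0 ∧ ∀ w ∈ (u t).support ∪ (v t).support, collapse n w ∈ e with hQdef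
  -- main claim: every edge has a witness
  have key₀ : ∀ p q : Fin n, p < q → G.Adj p q → ∃ t, Q s(p, q) t := by
    intro p q hpq hadj
    by_contra hnone
    push_neg at hnone
    have hfJ : edgeBinomial K n p q ∈ J := Ideal.subset_span ⟨p, q, hpq, hadj, rfl⟩
    have hfr : edgeBinomial K n p q ∈ (Ideal.span (Set.range B)).radical := by
      rw [hrad]; exact Ideal.le_radical hfJ
    obtain ⟨N, hN⟩ := Ideal.mem_radical_iff.mp hfr
    set S : Finset (Fin n) := {p, q} with hS
    set ψ := cut K S with hψ
    have hψf : ψ (edgeBinomial K n p q) = edgeBinomial K n p q :=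
      cut_edgeBinomial_of_mem S p q (by simp [hS]) (by simp [hS])
    have h1 : (edgeBinomial K n p q) ^ N ∈ Ideal.map ψ (Ideal.span (Set.range B)) := by
      have := Ideal.mem_map_of_mem ψ hN
      rwa [map_pow, hψf] at this
    rw [Ideal.map_span] at h1
    have h2 : Ideal.span (ψ '' Set.range B) ≤ (⊥ : Ideal (MvPolynomial (Fin (n+n)) K)) := by
      rw [Ideal.span_le]
      rintro g ⟨_, ⟨t, rfl⟩, rfl⟩
      rw [SetLike.mem_coe, Ideal.mem_bot]
      -- eval-one of ψ (B t) is zero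
      have hker : eval (fun _ => (1:K)) (ψ (B t)) = 0 := by
        apply eval_one_eq_zero G
        have hmm : ψ (B t) ∈ Ideal.map ψ J := Ideal.mem_map_of_mem _ (hmem t)
        have := cut_map_le G S hmm
        exact (Ideal.span_le.mpr (edge_set_subset_ideal G S)) this
      by_cases hall : ∀ w ∈ (u t).support ∪ (v t).support, collapse n w ∈ S
      · -- then ψ (B t) = B t, and B t = 0 since the edge has no witness
        have hψB : ψ (B t) = B t := by
          rw [huv t, map_sub,
            cut_monomial_of_mem _ _ _ (fun w hw => hall w (Finset.mem_union_left _ hw)),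
            cut_monomial_of_mem _ _ _ (fun w hw => hall w (Finset.mem_union_right _ hw))]
        by_cases h0 : B t = 0
        · rw [hψB, h0]
        · exfalso
          apply hnone t
          refine ⟨h0, fun w hw => ?_⟩
          have := hall w hw
          rw [hS] at this
          rcases Finset.mem_insert.mp this with h' | h'
          · exact Sym2.mem_iff.mpr (Or.inl h')
          · exact Sym2.mem_iff.mpr (Or.inr (Finset.mem_singleton.mp h'))
      · push_neg at hall
        obtain ⟨w₀, hw₀mem, hw₀⟩ := hall
        rcases Finset.mem_union.mp hw₀mem with hU | hV
        · have d1 : ψ (monomial (u t) (1:K)) = 0 :=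
            cut_monomial_of_not_mem S _ _ w₀ hU hw₀
          by_cases hv' : ∀ w ∈ (v t).support, collapse n w ∈ S
          · exfalso
            have : ψ (B t) = -(monomial (v t) 1) := by
              rw [huv t, map_sub, d1, cut_monomial_of_mem _ _ _ hv', zero_sub]
            rw [this] at hker
            simp [eval_monomial] at hker
          · push_neg at hv'
            obtain ⟨w₁, hw₁mem, hw₁⟩ := hv'
            have d2 : ψ (monomial (v t) (1:K)) = 0 :=
              cut_monomial_of_not_mem S _ _ w₁ hw₁mem hw₁
            rw [huv t, map_sub, d1, d2, sub_zero]
        · have d2 : ψ (monomial (v t) (1:K)) = 0 :=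
            cut_monomial_of_not_mem S _ _ w₀ hV hw₀
          by_cases hu' : ∀ w ∈ (u t).support, collapse n w ∈ S
          · exfalso
            have : ψ (B t) = monomial (u t) 1 := by
              rw [huv t, map_sub, d2, cut_monomial_of_mem _ _ _ hu', sub_zero]
            rw [this] at hker
            simp [eval_monomial] at hker
          · push_neg at hu'
            obtain ⟨w₁, hw₁mem, hw₁⟩ := hu'
            have d1 : ψ (monomial (u t) (1:K)) = 0 :=
              cut_monomial_of_not_mem S _ _ w₁ hw₁mem hw₁
            rw [huv t, map_sub, d1, d2, sub_zero]
    have h3 := h2 h1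
    rw [Ideal.mem_bot] at h3
    exact pow_ne_zero N (edgeBinomial_ne_zero hpq.ne) h3
  have key : ∀ e ∈ G.edgeFinset, ∃ t, Q e t := by
    intro e
    induction e using Sym2.ind with
    | _ a b =>
      intro he
      have hadj : G.Adj a b := (SimpleGraph.mem_edgeFinset.mp he)
      rcases hadj.ne.lt_or_gt with h | h
      · exact key₀ a b h hadj
      · rw [Sym2.eq_swap]
        exact key₀ b a h hadj.symm
  by_cases hs : s = 0
  · subst hs
    have : G.edgeFinset = ∅ := by
      rw [Finset.eq_empty_iff_forall_notMem]
      intro e he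
      obtain ⟨t, _⟩ := key e he
      exact t.elim0
    rw [this, Finset.card_empty]
  · have hspos : 0 < s := Nat.pos_of_ne_zero hs
    set t₀ : Fin s := ⟨0, hspos⟩ with ht₀
    set sel : Sym2 (Fin n) → Fin s := fun e => if h : ∃ t, Q e t then h.choose else t₀ with hsel
    have hselspec : ∀ e ∈ G.edgeFinset, Q e (sel e) := by
      intro e he
      have h := key e he
      rw [hsel]
      simp only [dif_pos h]
      exact h.choose_spec
    have hinj : Set.InjOn sel ↑G.edgeFinset := by
      intro e he e' he' heq
      by_contra hee
      have q1 := hselspec e he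
      have q2 := hselspec e' he'
      rw [heq] at q1
      set t := sel e' with ht
      obtain ⟨i, hi⟩ := sym2_inter e e' hee
      have huvmem : monomial (u t) (1:K) - monomial (v t) 1 ∈ binomialEdgeIdeal K G := by
        rw [← huv t]; exact hmem t
      have hconst : ∀ w ∈ (u t).support ∪ (v t).support, collapse n w = i :=
        fun w hw => hi _ (q1.2 w hw) (q2.2 w hw)
      have huveq : u t = v t :=
        singleton_support G (u t) (v t) huvmem i
          (fun w hw => hconst w (Finset.mem_union_left _ hw))
          (fun w hw => hconst w (Finset.mem_union_right _ hw))
      exact q1.1 (by rw [huv t, huveq, sub_self])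
    calc G.edgeFinset.card ≤ (Finset.univ : Finset (Fin s)).card :=
          Finset.card_le_card_of_injOn sel (fun a _ => Finset.mem_univ _) hinj
      _ = s := by rw [Finset.card_univ, Fintype.card_fin]

/-- Upper bound: the `m` edge binomials themselves generate `J_G`. -/
lemma upper_bound {m : ℕ} (hm : G.edgeFinset.card = m) :
    ∃ F : Fin m → MvPolynomial (Fin (n+n)) K,
      (∀ i, IsBinomial (F i)) ∧ (∀ i, F i ∈ binomialEdgeIdeal K G) ∧
      Ideal.span (Set.range F) = binomialEdgeIdeal K G := by
  classical
  set b : Sym2 (Fin n) → MvPolynomial (Fin (n+n)) K :=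
    Sym2.lift ⟨fun p q => if p < q then edgeBinomial K n p q else edgeBinomial K n q p, by
      intro p q
      dsimp only
      rcases lt_trichotomy p q with h | h | h
      · rw [if_pos h, if_neg (not_lt.mpr h.le)]
      · subst h; rfl
      · rw [if_neg (not_lt.mpr h.le), if_pos h]⟩ with hb
  have hbval : ∀ p q : Fin n, b s(p, q) = if p < q then edgeBinomial K n p q
      else edgeBinomial K n q p := fun p q => rfl
  have hbbin : ∀ e : Sym2 (Fin n), IsBinomial (b e) := by
    intro e
    induction e using Sym2.ind with
    | _ p q =>
      rw [hbval]
      split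
      · exact isBinomial_edgeBinomial p q
      · exact isBinomial_edgeBinomial q p
  have hbgen : ∀ e ∈ G.edgeFinset,
      b e ∈ {f | ∃ p q : Fin n, p < q ∧ G.Adj p q ∧ f = edgeBinomial K n p q} := by
    intro e
    induction e using Sym2.ind with
    | _ p q =>
      intro he
      have hadj : G.Adj p q := SimpleGraph.mem_edgeFinset.mp he
      rw [hbval]
      rcases hadj.ne.lt_or_gt with h | h
      · rw [if_pos h]; exact ⟨p, q, h, hadj, rfl⟩
      · rw [if_neg (not_lt.mpr h.le)]; exact ⟨q, p, h, hadj.symm, rfl⟩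
  set eqv := Finset.equivFinOfCardEq hm with heqv
  refine ⟨fun i => b ((eqv.symm i : {x // x ∈ G.edgeFinset}) : Sym2 (Fin n)), ?_, ?_, ?_⟩
  · intro i
    exact hbbin _
  · intro i
    exact Ideal.subset_span (hbgen _ (eqv.symm i).2)
  · have hrange : Set.range (fun i => b ((eqv.symm i : {x // x ∈ G.edgeFinset}) : Sym2 (Fin n)))
        = {f | ∃ p q : Fin n, p < q ∧ G.Adj p q ∧ f = edgeBinomial K n p q} := by
      ext g
      constructor
      · rintro ⟨i, rfl⟩
        exact hbgen _ (eqv.symm i).2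
      · rintro ⟨p, q, hpq, hadj, rfl⟩
        have hmem : s(p, q) ∈ G.edgeFinset := SimpleGraph.mem_edgeFinset.mpr hadj
        refine ⟨eqv ⟨s(p, q), hmem⟩, ?_⟩
        show b ((eqv.symm (eqv ⟨s(p, q), hmem⟩) : {x // x ∈ G.edgeFinset}) : Sym2 (Fin n))
            = edgeBinomial K n p q
        rw [Equiv.symm_apply_apply]
        rw [hbval, if_pos hpq]
    rw [hrange, binomialEdgeIdeal]

end Main

theorem stmt_4 (K : Type*) [Field K] (n : ℕ) (hn : 0 < n)
    (G : SimpleGraph (Fin n)) [DecidableRel G.Adj] (hconn : G.Connected)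
    (m : ℕ) (hm : G.edgeFinset.card = m) :
    bar (binomialEdgeIdeal K G) = m := by
  obtain ⟨F, hFbin, hFmem, hFspan⟩ := upper_bound (K := K) G hm
  have hmmem : m ∈ {s | ∃ B : Fin s → MvPolynomial (Fin (n+n)) K,
      (∀ i, IsBinomial (B i)) ∧ (∀ i, B i ∈ binomialEdgeIdeal K G) ∧
      (Ideal.span (Set.range B)).radical = (binomialEdgeIdeal K G).radical} :=
    ⟨F, hFbin, hFmem, by rw [hFspan]⟩
  apply le_antisymm
  · exact Nat.sInf_le hmmem
  · refine le_csInf ⟨m, hmmem⟩ ?_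
    rintro s ⟨B, hbin, hmem, hrad⟩
    rw [← hm]
    exact lower_bound G s B hbin hmem hrad
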